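/- arXiv:math/0107063 — 2 statements merged into one kernel-verified Lean document; each statement's English description precedes it below -/
import Mathlib

section
/- If R ⊆ φ⁻¹(b) is a set containing exactly one element from each W-orbit in A that meets φ⁻¹(b), then ∑_{x ∈ R} t(x) = 1/|Stab_W(b)|. -/
/-- If `R` contains exactly one element from each `W`-orbit in `A` meeting the
fiber `φ⁻¹(b)`, then `∑_{x ∈ R} t(x) = 1 / |Stab_W(b)|`. -/
theorem stmt_3 {W A B : Type*} [Group W] [Fintype W] [Fintype A] [Fintype B]
    [DecidableEq B] [MulAction W A] [MulAction W B]
    (φ : A → B) (hφ : ∀ (w : W) (a : A), φ (w • a) = w • φ a)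
    (t : A → ℝ) (ht : ∀ (w : W) (a : A), t (w • a) = t a)
    (b : B)
    (hsum : ∑ x ∈ Finset.univ.filter (fun x => φ x = b), t x = 1)
    (hfree : ∀ x : A, φ x = b → ∀ w : W, w • b = b → w • x = x → w = 1)
    (R : Finset A) (hRsub : ∀ x ∈ R, φ x = b)
    (hRrep : ∀ x : A, φ x = b → ∃! y, y ∈ R ∧ ∃ w : W, w • x = y) :
    ∑ x ∈ R, t x = 1 / (Nat.card (MulAction.stabilizer W b) : ℝ) := by
  classical
  set S := MulAction.stabilizer W b with hS
  have key : ∑ p ∈ (Finset.univ : Finset S) ×ˢ R, t ((p.1 : W) • p.2)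
      = ∑ x ∈ Finset.univ.filter (fun x => φ x = b), t x := by
    apply Finset.sum_bij (fun p _ => (p.1 : W) • p.2)
    · rintro ⟨w, x⟩ hp
      simp only [Finset.mem_product, Finset.mem_univ, true_and] at hp
      simp only [Finset.mem_filter, Finset.mem_univ, true_and]
      rw [hφ, hRsub x hp]
      exact w.2
    · rintro ⟨w₁, x₁⟩ h₁ ⟨w₂, x₂⟩ h₂ heq
      simp only [Finset.mem_product, Finset.mem_univ, true_and] at h₁ h₂
      simp only at heq
      have hb1 : φ x₁ = b := hRsub _ h₁
      have hx : ((w₂ : W)⁻¹ * (w₁ : W)) • x₁ = x₂ := by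
        rw [mul_smul, heq, inv_smul_smul]
      obtain ⟨y, _, huniq⟩ := hRrep x₁ hb1
      have e1 : x₁ = y := huniq x₁ ⟨h₁, 1, one_smul _ _⟩
      have e2 : x₂ = y := huniq x₂ ⟨h₂, _, hx⟩
      have ex : x₁ = x₂ := e1.trans e2.symm
      have hmem : ((w₂ : W)⁻¹ * (w₁ : W)) ∈ S := S.mul_mem (S.inv_mem w₂.2) w₁.2
      have hw : ((w₂ : W)⁻¹ * (w₁ : W)) = 1 := by
        apply hfree x₁ hb1 _ hmem
        rw [hx, ex]
      have : (w₁ : W) = (w₂ : W) := by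
        have := mul_eq_one_iff_eq_inv.mp hw
        simpa [inv_inv] using (congrArg (·⁻¹) this).symm
      exact Prod.ext (Subtype.ext this) ex
    · intro x hx
      simp only [Finset.mem_filter, Finset.mem_univ, true_and] at hx
      obtain ⟨y, ⟨hyR, w, hw⟩, _⟩ := hRrep x hx
      have hwS : w ∈ S := by
        have : φ (w • x) = b := by rw [hw]; exact hRsub _ hyR
        rw [hφ, hx] at this
        exact this
      refine ⟨⟨⟨w⁻¹, S.inv_mem hwS⟩, y⟩, ?_, ?_⟩
      · simp [hyR]
      · simp only
        rw [← hw, inv_smul_smul]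
    · intro p _
      rfl
  rw [Finset.sum_product] at key
  simp only [ht] at key
  rw [Finset.sum_const, nsmul_eq_mul] at key
  have hcard : (Nat.card S : ℝ) = (Finset.univ : Finset S).card := by
    rw [Nat.card_eq_fintype_card, Finset.card_univ]
  have hpos : (0 : ℝ) < (Finset.univ : Finset S).card := by
    have : 0 < Fintype.card S := Fintype.card_pos
    simpa [Finset.card_univ] using (Nat.cast_pos (α := ℝ)).mpr this
  rw [hcard, eq_div_iff hpos.ne', mul_comm]
  rw [key, hsum]
end

section
/- There exists a holomorphic function h: Ω → ℂ such that g(z) = ℓ(z)·h(z) for all z ∈ Ω; i.e., a holomorphic function on a convex open set vanishing on the trace of an affine hyperplane is divisible by the defining affine functional. -/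
open Metric Complex Set

/-- Cauchy-estimate: a holomorphic function on an open subset of a complex Banach space
is Lipschitz near each point, with explicit sup-bound data. -/
lemma locLip {E : Type*} [NormedAddCommGroup E] [NormedSpace ℂ E] [ProperSpace E] {Ω : Set E}
    (hΩ : IsOpen Ω) {g : E → ℂ} (hg : DifferentiableOn ℂ g Ω) {z₀ : E} (hz₀ : z₀ ∈ Ω) :
    ∃ s > 0, ∃ M ≥ 0, closedBall z₀ s ⊆ Ω ∧ (∀ x ∈ closedBall z₀ s, ‖g x‖ ≤ M) ∧
      ∀ x ∈ closedBall z₀ s, ∀ y ∈ closedBall z₀ s, ‖g x - g y‖ ≤ (M / s) * ‖x - y‖ := by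
  obtain ⟨r, hr0, hrΩ⟩ := (Metric.nhds_basis_closedBall.mem_iff).1 (hΩ.mem_nhds hz₀)
  set s := r / 3 with hs
  have hs0 : 0 < s := by positivity
  have h3s : closedBall z₀ (3 * s) ⊆ Ω := by
    refine subset_trans (closedBall_subset_closedBall ?_) hrΩ
    rw [hs]; linarith
  obtain ⟨M, hM⟩ := (isCompact_closedBall z₀ (3 * s)).exists_bound_of_continuousOn
    (hg.continuousOn.mono h3s)
  have hM0 : 0 ≤ M := le_trans (norm_nonneg _) (hM z₀ (mem_closedBall_self (by positivity)))
  refine ⟨s, hs0, M, hM0, ?_, ?_, ?_⟩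
  · exact subset_trans (closedBall_subset_closedBall (by linarith)) h3s
  · exact fun x hx => hM x (closedBall_subset_closedBall (by linarith) hx)
  -- fderiv bound on closedBall z₀ s
  have hball : ∀ x ∈ closedBall z₀ s, DifferentiableAt ℂ g x := fun x hx =>
    hg.differentiableAt (hΩ.mem_nhds (h3s (closedBall_subset_closedBall (by linarith) hx)))
  have key : ∀ x ∈ closedBall z₀ s, ‖fderiv ℂ g x‖ ≤ M / s := by
    intro x hx
    refine ContinuousLinearMap.opNorm_le_bound _ (by positivity) ?_
    intro u
    rcases eq_or_ne u 0 with rfl | hu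
    · simp
    · -- reduce to unit vector
      set t : ℝ := ‖u‖ with ht
      have ht0 : 0 < t := norm_pos_iff.2 hu
      set w : E := (t : ℂ)⁻¹ • u with hw
      have hwn : ‖w‖ = 1 := by
        rw [hw, norm_smul, norm_inv, Complex.norm_real, Real.norm_eq_abs, abs_of_pos ht0, ← ht]
        field_simp
      have huw : u = (t : ℂ) • w := by
        rw [hw, smul_smul]
        rw [mul_inv_cancel₀ (by exact_mod_cast ht0.ne')]
        simp
      -- 1-D slice q λ = g (x + λ • w)
      set q : ℂ → ℂ := fun lam => g (x + lam • w) with hq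
      have hmaps : ∀ lam : ℂ, lam ∈ ball (0:ℂ) (2*s) → x + lam • w ∈ Ω := by
        intro lam hlam
        apply h3s
        rw [mem_closedBall]
        calc dist (x + lam • w) z₀ ≤ dist (x + lam • w) x + dist x z₀ := dist_triangle _ _ _
        _ ≤ ‖lam‖ + s := by
            gcongr
            · rw [dist_eq_norm, add_sub_cancel_left, norm_smul, hwn, mul_one]
            · exact hx
        _ ≤ 3 * s := by
            have := (mem_ball_zero_iff.1 hlam)
            have : ‖lam‖ ≤ 2 * s := le_of_lt this
            linarith
      have hqdiff : DifferentiableOn ℂ q (ball (0:ℂ) (2*s)) := by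
        intro lam hlam
        have : DifferentiableAt ℂ q lam := by
          have h1 : DifferentiableAt ℂ (fun lam : ℂ => x + lam • w) lam := by
            fun_prop
          exact (hg.differentiableAt (hΩ.mem_nhds (hmaps lam hlam))).comp lam h1
        exact this.differentiableWithinAt
      -- Cauchy estimate for deriv q 0
      have hderiv_bound : ‖deriv q 0‖ ≤ M / s := by
        rw [← Complex.cderiv_eq_deriv isOpen_ball hqdiff hs0 ?_]
        · refine Complex.norm_cderiv_le hs0 ?_
          intro lam hlam
          have hlam' : ‖lam‖ = s := by simpa [dist_eq_norm] using hlam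
          refine hM _ ?_
          rw [mem_closedBall]
          calc dist (x + lam • w) z₀ ≤ dist (x + lam • w) x + dist x z₀ := dist_triangle _ _ _
          _ ≤ s + s := by
              gcongr
              · rw [dist_eq_norm, add_sub_cancel_left, norm_smul, hwn, mul_one]
                exact hlam'.le
              · exact hx
          _ ≤ 3 * s := by linarith
        · exact closedBall_subset_ball (by linarith)
      -- deriv q 0 = fderiv g x w
      have hdq : deriv q 0 = fderiv ℂ g x w := by
        have hinner : HasDerivAt (fun lam : ℂ => x + lam • w) w 0 := by
          simpa using ((hasDerivAt_id (0:ℂ)).smul_const w).const_add x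
        have houter : HasFDerivAt g (fderiv ℂ g x) (x + (0:ℂ) • w) := by
          simpa using (hball x hx).hasFDerivAt
        have : HasDerivAt q (fderiv ℂ g x w) 0 := by
          have := houter.comp_hasDerivAt (x := (0:ℂ)) hinner
          exact this
        exact this.deriv
      calc ‖fderiv ℂ g x u‖ = t * ‖fderiv ℂ g x w‖ := by
            rw [huw, map_smul, norm_smul, Complex.norm_real, Real.norm_eq_abs, abs_of_pos ht0]
      _ ≤ t * (M / s) := mul_le_mul_of_nonneg_left (hdq ▸ hderiv_bound) ht0.le
      _ = M / s * ‖u‖ := by rw [ht]; ring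
  intro x hx y hy
  exact (convex_closedBall z₀ s).norm_image_sub_le_of_norm_fderiv_le hball key hy hx

set_option maxHeartbeats 1000000

/-- A holomorphic function on a convex open subset of `ℂⁿ` vanishing on the trace
of an affine hyperplane `ℓ⁻¹(0)`, `ℓ(z) = ⟨a,z⟩ − c` with `a ≠ 0`, is divisible by
`ℓ` within the holomorphic functions on that set. -/
theorem stmt_13 {n : ℕ} (Ω : Set (Fin n → ℂ)) (hΩo : IsOpen Ω) (hΩc : Convex ℝ Ω)
    (a : Fin n → ℂ) (ha : a ≠ 0) (c : ℂ)
    (g : (Fin n → ℂ) → ℂ) (hg : DifferentiableOn ℂ g Ω)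
    (hvan : ∀ z ∈ Ω, (∑ i, a i * z i) - c = 0 → g z = 0) :
    ∃ h : (Fin n → ℂ) → ℂ, DifferentiableOn ℂ h Ω ∧
      ∀ z ∈ Ω, g z = ((∑ i, a i * z i) - c) * h z := by
  classical
  -- the linear functional
  set L : (Fin n → ℂ) →L[ℂ] ℂ := ∑ i, a i • (ContinuousLinearMap.proj i) with hLdef
  have hL : ∀ z : Fin n → ℂ, L z = ∑ i, a i * z i := by
    intro z
    rw [hLdef]
    simp [ContinuousLinearMap.sum_apply, ContinuousLinearMap.smul_apply,
      ContinuousLinearMap.proj_apply, smul_eq_mul]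
  -- the vector v with L v = 1
  set S : ℂ := ∑ i, a i * (starRingEnd ℂ) (a i) with hSdef
  have hS0 : S ≠ 0 := by
    intro h0
    apply ha
    have hz : ∀ i, a i = 0 := by
      intro i
      have hnn : ∀ i : Fin n, (0:ℝ) ≤ (a i * (starRingEnd ℂ) (a i)).re := by
        intro i
        rw [Complex.mul_conj]
        simpa using Complex.normSq_nonneg (a i)
      have hre : (∑ i, (a i * (starRingEnd ℂ) (a i)).re) = 0 := by
        have := congrArg Complex.re h0
        simpa [hSdef, Complex.re_sum] using this
      have h1 := (Finset.sum_eq_zero_iff_of_nonneg (fun i _ => hnn i)).1 hre i (Finset.mem_univ i)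
      rw [Complex.mul_conj] at h1
      have habs : Complex.normSq (a i) = 0 := by exact_mod_cast h1
      exact Complex.normSq_eq_zero.1 habs
    funext i; exact hz i
  set v : Fin n → ℂ := fun i => (starRingEnd ℂ) (a i) / S with hvdef
  have hv : L v = 1 := by
    rw [hL]
    simp only [hvdef, ← mul_div_assoc]
    rw [← Finset.sum_div, ← hSdef, div_self hS0]
  -- p and A
  set A : (Fin n → ℂ) →L[ℂ] (Fin n → ℂ) :=
    ContinuousLinearMap.id ℂ (Fin n → ℂ) - L.smulRight v with hAdef
  set p : (Fin n → ℂ) → (Fin n → ℂ) := fun z => z - (L z - c) • v with hpdef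
  have hpA : ∀ z z' : Fin n → ℂ, p z - p z' = A (z - z') := by
    intro z z'
    simp only [hpdef, hAdef, ContinuousLinearMap.sub_apply, ContinuousLinearMap.id_apply,
      ContinuousLinearMap.smulRight_apply, map_sub]
    module
  have hpcont : Continuous p := by
    apply Continuous.sub continuous_id
    exact ((L.continuous.sub continuous_const).smul continuous_const)
  have hlp : ∀ z : Fin n → ℂ, L (p z) - c = 0 := by
    intro z
    simp only [hpdef, map_sub, map_smul, hv, smul_eq_mul, mul_one]
    ring
  have hpz : ∀ z : Fin n → ℂ, p z + (L z - c) • v = z := by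
    intro z; simp [hpdef]
  -- the vanishing hypothesis in terms of L
  have hvan' : ∀ z ∈ Ω, L z - c = 0 → g z = 0 := by
    intro z hz h0
    exact hvan z hz (by rwa [← hL z])
  -- the candidate function
  set h : (Fin n → ℂ) → ℂ := fun z =>
    if L z - c = 0 then deriv (fun lam : ℂ => g (z + lam • v)) 0 else g z / (L z - c) with hhdef
  clear_value L S v A p h
  refine ⟨h, ?_, ?_⟩
  · -- differentiability
    intro z₀ hz₀
    suffices hd : DifferentiableAt ℂ h z₀ from hd.differentiableWithinAt
    by_cases hc0 : L z₀ - c = 0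
    · -- hard case : z₀ lies on the hyperplane
      obtain ⟨s, hs0, M, hM0, hsΩ, hgM, hglip⟩ := locLip hΩo hg hz₀
      set ρ : ℝ := s / (4 * (‖v‖ + 1)) with hρdef
      clear_value ρ
      have hρ0 : 0 < ρ := by rw [hρdef]; positivity
      have hkey : ρ * (‖v‖ + 1) = s / 4 := by
        rw [hρdef]; field_simp
      have hρv : ρ * ‖v‖ ≤ s / 4 := by
        rw [← hkey]
        exact mul_le_mul_of_nonneg_left (by linarith) hρ0.le
      have hρs : ρ ≤ s / 4 := by
        rw [← hkey]
        nth_rewrite 1 [← mul_one ρ]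
        exact mul_le_mul_of_nonneg_left (by nlinarith [norm_nonneg v]) hρ0.le
      have hpz₀ : p z₀ = z₀ := by simp [hpdef, hc0]
      -- choose ε
      have hUopen : IsOpen {z : Fin n → ℂ | ‖p z - z₀‖ < s/4 ∧ ‖L z - c‖ < ρ/2} := by
        refine IsOpen.inter ?_ ?_
        · exact isOpen_lt ((hpcont.sub continuous_const).norm) continuous_const
        · exact isOpen_lt ((L.continuous.sub continuous_const).norm) continuous_const
      have hz₀U : z₀ ∈ {z : Fin n → ℂ | ‖p z - z₀‖ < s/4 ∧ ‖L z - c‖ < ρ/2} := by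
        constructor
        · simp [hpz₀]; positivity
        · simp [hc0]; positivity
      obtain ⟨ε, hε0, hεU⟩ := Metric.isOpen_iff.1 hUopen z₀ hz₀U
      -- membership facts
      have hmem : ∀ z ∈ ball z₀ ε, ∀ lam : ℂ, ‖lam‖ ≤ 2*ρ →
          p z + lam • v ∈ closedBall z₀ s := by
        intro z hz lam hlam
        have hzU := hεU hz
        rw [mem_closedBall, dist_eq_norm]
        calc ‖p z + lam • v - z₀‖ ≤ ‖p z - z₀‖ + ‖lam • v‖ := by
              rw [add_sub_right_comm]; exact norm_add_le _ _
        _ ≤ s/4 + 2*ρ*‖v‖ := by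
              refine add_le_add hzU.1.le ?_
              rw [norm_smul]
              exact mul_le_mul_of_nonneg_right hlam (norm_nonneg v)
        _ ≤ s := by nlinarith
      have hmemΩ : ∀ z ∈ ball z₀ ε, ∀ lam : ℂ, ‖lam‖ ≤ 2*ρ →
          p z + lam • v ∈ Ω := fun z hz lam hlam => hsΩ (hmem z hz lam hlam)
      have habsw : ∀ θ : ℝ, ‖circleMap 0 ρ θ‖ = ρ := by
        intro θ
        rw [norm_circleMap_zero, abs_of_pos hρ0]
      have hden : ∀ z ∈ ball z₀ ε, ∀ θ : ℝ, ρ/2 ≤ ‖circleMap 0 ρ θ - (L z - c)‖ := by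
        intro z hz θ
        have h1 := norm_sub_norm_le (circleMap 0 ρ θ) (L z - c)
        have h2 := (hεU hz).2
        rw [habsw θ] at h1
        linarith
      have hden0 : ∀ z ∈ ball z₀ ε, ∀ θ : ℝ, circleMap 0 ρ θ - (L z - c) ≠ 0 := by
        intro z hz θ
        have := hden z hz θ
        intro h0
        rw [h0, norm_zero] at this
        linarith
      set F : (Fin n → ℂ) → ℝ → ℂ := fun z θ =>
        g (p z + circleMap 0 ρ θ • v) / (circleMap 0 ρ θ - (L z - c)) with hFdef
      have claim1 : ∀ z ∈ ball z₀ ε,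
          h z = (2 * Real.pi : ℂ)⁻¹ * ∫ θ in (0:ℝ)..(2 * Real.pi), F z θ := by
        intro z hz
        set φ : ℂ → ℂ := fun lam => g (p z + lam • v) with hφdef
        have hpΩ : p z ∈ Ω := by
          have := hmemΩ z hz 0 (by simp; positivity)
          simpa using this
        have hgp : g (p z) = 0 := hvan' (p z) hpΩ (hlp z)
        have hφ0 : φ 0 = 0 := by
          simp only [hφdef, zero_smul, add_zero]
          exact hgp
        have hφd : DifferentiableOn ℂ φ (ball 0 (2*ρ)) := by
          intro lam hlam
          have hin : DifferentiableAt ℂ (fun lam : ℂ => p z + lam • v) lam :=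
            (differentiableAt_id.smul_const v).const_add (p z)
          have hout : DifferentiableAt ℂ g (p z + lam • v) :=
            hg.differentiableAt (hΩo.mem_nhds
              (hmemΩ z hz lam (le_of_lt (mem_ball_zero_iff.1 hlam))))
          exact (hout.comp lam hin).differentiableWithinAt
        have hψd : DifferentiableOn ℂ (dslope φ 0) (ball 0 (2*ρ)) :=
          (Complex.differentiableOn_dslope
            (isOpen_ball.mem_nhds (mem_ball_self (by positivity)))).2 hφd
        have hdcc : DiffContOnCl ℂ (dslope φ 0) (ball 0 ρ) := by
          refine DifferentiableOn.diffContOnCl (hψd.mono ?_)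
          rw [closure_ball (0:ℂ) hρ0.ne']
          exact closedBall_subset_ball (by linarith)
        have hwmem : (L z - c) ∈ ball (0:ℂ) ρ := by
          rw [mem_ball_zero_iff]
          have := (hεU hz).2
          linarith
        have hcauchy := hdcc.circleIntegral_sub_inv_smul hwmem
        rw [circleIntegral] at hcauchy
        have hinteq : ∀ θ : ℝ, deriv (circleMap 0 ρ) θ •
            ((circleMap 0 ρ θ - (L z - c))⁻¹ • dslope φ 0 (circleMap 0 ρ θ)) = I * F z θ := by
          intro θ
          have hw0 : circleMap 0 ρ θ ≠ 0 := circleMap_ne_center hρ0.ne'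
          rw [deriv_circleMap, dslope_of_ne _ hw0]
          simp only [slope, hφ0, vsub_eq_sub, sub_zero, hφdef, hFdef, smul_eq_mul,
            zero_smul, add_zero, hgp]
          field_simp [hw0, hden0 z hz θ]
        rw [intervalIntegral.integral_congr (g := fun θ => I * F z θ)
          (fun θ _ => hinteq θ)] at hcauchy
        rw [intervalIntegral.integral_const_mul] at hcauchy
        have hψval : dslope φ 0 (L z - c) = h z := by
          by_cases hz0 : L z - c = 0
          · rw [hz0, dslope_same]
            have hpzz : p z = z := by simp [hpdef, hz0]
            simp only [hhdef, if_pos hz0, hφdef, hpzz]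
          · rw [dslope_of_ne _ hz0]
            simp only [slope, hφ0, vsub_eq_sub, sub_zero, hφdef, smul_eq_mul, hpz z,
              zero_smul, add_zero, hgp]
            simp only [hhdef, if_neg hz0]
            rw [div_eq_inv_mul]
        rw [hψval, smul_eq_mul] at hcauchy
        have h2π : (2 * (Real.pi:ℂ)) ≠ 0 :=
          mul_ne_zero two_ne_zero (Complex.ofReal_ne_zero.2 Real.pi_ne_zero)
        have h4 : (∫ θ in (0:ℝ)..(2*Real.pi), F z θ) = 2 * Real.pi * h z := by
          refine mul_left_cancel₀ I_ne_zero ?_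
          rw [hcauchy]; ring
        rw [h4, inv_mul_cancel_left₀ h2π]
      have claim2 : DifferentiableAt ℂ
          (fun z => (2 * Real.pi : ℂ)⁻¹ * ∫ θ in (0:ℝ)..(2 * Real.pi), F z θ) z₀ := by
        have hz₀ball : z₀ ∈ ball z₀ ε := mem_ball_self hε0
        -- continuity of F z in θ
        have hFcont : ∀ z ∈ ball z₀ ε, Continuous (F z) := by
          intro z hz
          rw [hFdef]
          refine Continuous.div ?_ ?_ (fun θ => hden0 z hz θ)
          · refine ContinuousOn.comp_continuous hg.continuousOn ?_ ?_
            · exact continuous_const.add ((continuous_circleMap 0 ρ).smul continuous_const)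
            · intro θ
              exact hmemΩ z hz _ (by rw [habsw]; linarith)
          · exact ((continuous_circleMap 0 ρ).sub continuous_const)
        -- the candidate derivative at z₀
        set F' : ℝ → (Fin n → ℂ) →L[ℂ] ℂ := fun θ =>
          g (p z₀ + circleMap 0 ρ θ • v) •
              ((-(ContinuousLinearMap.mulLeftRight ℂ ℂ
                  (circleMap 0 ρ θ - (L z₀ - c))⁻¹
                  (circleMap 0 ρ θ - (L z₀ - c))⁻¹)).comp (-L)) +
            (circleMap 0 ρ θ - (L z₀ - c))⁻¹ •
              ((fderiv ℂ g (p z₀ + circleMap 0 ρ θ • v)).comp A) with hF'def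
        -- p has derivative A everywhere
        have hp_deriv : ∀ x : Fin n → ℂ, HasFDerivAt p A x := by
          intro x
          have h1 : HasFDerivAt (fun z : Fin n → ℂ => z)
              (ContinuousLinearMap.id ℂ (Fin n → ℂ)) x := hasFDerivAt_id x
          have h2 : HasFDerivAt (fun z : Fin n → ℂ => (L z - c) • v)
              (L.smulRight v) x := by
            exact (L.hasFDerivAt.sub_const c).smul_const v
          have := h1.sub h2
          rw [hpdef, hAdef]
          exact this
        have hdiff : ∀ θ : ℝ, HasFDerivAt (fun z => F z θ) (F' θ) z₀ := by
          intro θ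
          have hw2ρ : ‖circleMap 0 ρ θ‖ ≤ 2*ρ := by rw [habsw]; linarith
          have hinner : HasFDerivAt (fun z : Fin n → ℂ => p z + circleMap 0 ρ θ • v)
              A z₀ := (hp_deriv z₀).add_const _
          have hout : HasFDerivAt g (fderiv ℂ g (p z₀ + circleMap 0 ρ θ • v))
              (p z₀ + circleMap 0 ρ θ • v) :=
            (hg.differentiableAt (hΩo.mem_nhds (hmemΩ z₀ hz₀ball _ hw2ρ))).hasFDerivAt
          have hG1 : HasFDerivAt (fun z : Fin n → ℂ => g (p z + circleMap 0 ρ θ • v))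
              ((fderiv ℂ g (p z₀ + circleMap 0 ρ θ • v)).comp A) z₀ := hout.comp z₀ hinner
          have hG2inner : HasFDerivAt (fun z : Fin n → ℂ => circleMap 0 ρ θ - (L z - c))
              (-L) z₀ := (L.hasFDerivAt.sub_const c).const_sub _
          have hG2 : HasFDerivAt
              (fun z : Fin n → ℂ => (circleMap 0 ρ θ - (L z - c))⁻¹)
              ((-(ContinuousLinearMap.mulLeftRight ℂ ℂ
                  (circleMap 0 ρ θ - (L z₀ - c))⁻¹
                  (circleMap 0 ρ θ - (L z₀ - c))⁻¹)).comp (-L)) z₀ :=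
            (hasFDerivAt_inv' (hden0 z₀ hz₀ball θ)).comp z₀ hG2inner
          have := hG1.mul hG2
          rw [hF'def]
          simp only [hFdef, div_eq_mul_inv]
          exact this
        -- measurability of F'
        have hF'_meas : MeasureTheory.AEStronglyMeasurable F'
            (MeasureTheory.volume.restrict (Set.uIoc (0:ℝ) (2*Real.pi))) := by
          rw [hF'def]
          have hcont1 : Continuous fun θ : ℝ => g (p z₀ + circleMap 0 ρ θ • v) := by
            refine ContinuousOn.comp_continuous hg.continuousOn ?_ ?_
            · exact continuous_const.add ((continuous_circleMap 0 ρ).smul continuous_const)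
            · intro θ
              exact hmemΩ z₀ hz₀ball _ (by rw [habsw]; linarith)
          have hcontu : Continuous fun θ : ℝ => (circleMap 0 ρ θ - (L z₀ - c))⁻¹ :=
            ((continuous_circleMap 0 ρ).sub continuous_const).inv₀
              (fun θ => hden0 z₀ hz₀ball θ)
          have hm1 : Continuous fun θ : ℝ =>
              g (p z₀ + circleMap 0 ρ θ • v) •
                ((-(ContinuousLinearMap.mulLeftRight ℂ ℂ
                    (circleMap 0 ρ θ - (L z₀ - c))⁻¹
                    (circleMap 0 ρ θ - (L z₀ - c))⁻¹)).comp (-L)) := by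
            refine hcont1.smul ?_
            refine Continuous.clm_comp ?_ continuous_const
            refine Continuous.neg ?_
            exact ((ContinuousLinearMap.mulLeftRight ℂ ℂ).continuous₂.comp₂ hcontu hcontu)
          have hfd : Measurable fun θ : ℝ =>
              fderiv ℂ g (p z₀ + circleMap 0 ρ θ • v) :=
            (measurable_fderiv ℂ g).comp
              (continuous_const.add ((continuous_circleMap 0 ρ).smul
                continuous_const)).measurable
          have hcompA : Continuous fun B : (Fin n → ℂ) →L[ℂ] ℂ => B.comp A :=
            ((ContinuousLinearMap.compL ℂ (Fin n → ℂ) (Fin n → ℂ) ℂ).flip A).continuous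
          have hm2' : Measurable fun θ : ℝ =>
              (fderiv ℂ g (p z₀ + circleMap 0 ρ θ • v)).comp A :=
            hcompA.measurable.comp hfd
          have hm2 : MeasureTheory.AEStronglyMeasurable (fun θ : ℝ =>
              (circleMap 0 ρ θ - (L z₀ - c))⁻¹ •
                ((fderiv ℂ g (p z₀ + circleMap 0 ρ θ • v)).comp A))
              (MeasureTheory.volume.restrict (Set.uIoc (0:ℝ) (2*Real.pi))) :=
            (hcontu.aestronglyMeasurable).smul hm2'.aestronglyMeasurable
          exact (hm1.aestronglyMeasurable).add hm2
        -- the Lipschitz bound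
        set K : ℝ := M * ‖L‖ / ((ρ/2)*(ρ/2)) + 2/ρ * (M/s * ‖A‖) with hKdef
        have hK0 : 0 ≤ K := by
          rw [hKdef]
          have := norm_nonneg L
          have := norm_nonneg A
          positivity
        have hlip : ∀ θ : ℝ, LipschitzOnWith (Real.nnabs K)
            (fun z => F z θ) (ball z₀ ε) := by
          intro θ
          rw [lipschitzOnWith_iff_dist_le_mul]
          intro x hx y hy
          rw [dist_eq_norm, dist_eq_norm]
          have hwx := hden0 x hx θ
          have hwy := hden0 y hy θ
          set b₁ := g (p x + circleMap 0 ρ θ • v) with hb₁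
          set b₂ := g (p y + circleMap 0 ρ θ • v) with hb₂
          set d₁ := (circleMap 0 ρ θ - (L x - c))⁻¹ with hd₁
          set d₂ := (circleMap 0 ρ θ - (L y - c))⁻¹ with hd₂
          have hsplit : F x θ - F y θ = b₁ * (d₁ - d₂) + d₂ * (b₁ - b₂) := by
            simp only [hFdef, div_eq_mul_inv, ← hb₁, ← hb₂, ← hd₁, ← hd₂]
            ring
          have hb₁M : ‖b₁‖ ≤ M := hgM _ (hmem x hx _ (by rw [habsw]; linarith))
          have hd₂ρ : ‖d₂‖ ≤ 2/ρ := by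
            rw [hd₂, norm_inv]
            rw [inv_le_comm₀ (lt_of_lt_of_le (by positivity) (hden y hy θ)) (by positivity)]
            have := hden y hy θ
            calc (2/ρ)⁻¹ = ρ/2 := by field_simp
            _ ≤ _ := hden y hy θ
          have hdd : ‖d₁ - d₂‖ ≤ ‖L‖ / ((ρ/2)*(ρ/2)) * ‖x - y‖ := by
            rw [hd₁, hd₂, inv_sub_inv hwx hwy]
            have hnum : circleMap 0 ρ θ - (L y - c) - (circleMap 0 ρ θ - (L x - c)) =
                L (x - y) := by rw [map_sub]; ring
            rw [hnum, norm_div, norm_mul]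
            rw [div_le_iff₀ (by
              have h1 := lt_of_lt_of_le (by positivity : (0:ℝ) < ρ/2) (hden x hx θ)
              have h2 := lt_of_lt_of_le (by positivity : (0:ℝ) < ρ/2) (hden y hy θ)
              positivity)]
            calc ‖L (x - y)‖ ≤ ‖L‖ * ‖x - y‖ := L.le_opNorm _
            _ ≤ ‖L‖ / ((ρ/2)*(ρ/2)) * ‖x - y‖ *
                (‖circleMap 0 ρ θ - (L x - c)‖ * ‖circleMap 0 ρ θ - (L y - c)‖) := by
                rw [div_mul_eq_mul_div, div_mul_eq_mul_div, div_mul_eq_mul_div]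
                rw [le_div_iff₀ (by positivity)]
                have h1 := hden x hx θ
                have h2 := hden y hy θ
                have h3 : (ρ/2) * (ρ/2) ≤
                    ‖circleMap 0 ρ θ - (L x - c)‖ * ‖circleMap 0 ρ θ - (L y - c)‖ := by
                  refine mul_le_mul h1 h2 (by positivity) (norm_nonneg _)
                have h4 : (0:ℝ) ≤ ‖L‖ * ‖x - y‖ := by positivity
                nlinarith [norm_nonneg (x - y), norm_nonneg L]
          have hbb : ‖b₁ - b₂‖ ≤ M/s * ‖A‖ * ‖x - y‖ := by
            rw [hb₁, hb₂]
            have := hglip (p x + circleMap 0 ρ θ • v)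
              (hmem x hx (circleMap 0 ρ θ) (by rw [habsw]; linarith))
              (p y + circleMap 0 ρ θ • v)
              (hmem y hy (circleMap 0 ρ θ) (by rw [habsw]; linarith))
            refine le_trans this ?_
            have heq : p x + circleMap 0 ρ θ • v - (p y + circleMap 0 ρ θ • v) =
                A (x - y) := by
              rw [← hpA x y]; abel
            rw [heq, mul_assoc]
            refine mul_le_mul_of_nonneg_left ?_ (by positivity)
            exact A.le_opNorm _
          calc ‖F x θ - F y θ‖ ≤ ‖b₁‖ * ‖d₁ - d₂‖ + ‖d₂‖ * ‖b₁ - b₂‖ := by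
                rw [hsplit]
                refine le_trans (norm_add_le _ _) ?_
                rw [norm_mul, norm_mul]
          _ ≤ M * (‖L‖ / ((ρ/2)*(ρ/2)) * ‖x - y‖) + (2/ρ) * (M/s * ‖A‖ * ‖x - y‖) := by
                refine add_le_add ?_ ?_
                · exact mul_le_mul hb₁M hdd (norm_nonneg _) hM0
                · exact mul_le_mul hd₂ρ hbb (norm_nonneg _) (by positivity)
          _ ≤ ↑(Real.nnabs K) * ‖x - y‖ := by
                have : (↑(Real.nnabs K) : ℝ) = |K| := by simp
                rw [this]
                have hKabs : K ≤ |K| := le_abs_self K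
                have hexp : M * (‖L‖ / ((ρ/2)*(ρ/2)) * ‖x - y‖) +
                    (2/ρ) * (M/s * ‖A‖ * ‖x - y‖) = K * ‖x - y‖ := by
                  rw [hKdef]; ring
                rw [hexp]
                exact mul_le_mul_of_nonneg_right hKabs (norm_nonneg _)
        -- apply differentiation under the integral sign
        have key := intervalIntegral.hasFDerivAt_integral_of_dominated_loc_of_lip
          (𝕜 := ℂ) (μ := MeasureTheory.volume) (F := F) (F' := F') (x₀ := z₀)
          (a := 0) (b := 2*Real.pi) (bound := fun _ => K) (ball_mem_nhds z₀ hε0)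
          (by filter_upwards [ball_mem_nhds z₀ hε0] with z hz using
            (hFcont z hz).aestronglyMeasurable)
          ((hFcont z₀ hz₀ball).intervalIntegrable _ _)
          hF'_meas
          (MeasureTheory.ae_of_all _ (fun θ _ => hlip θ))
          intervalIntegrable_const
          (MeasureTheory.ae_of_all _ (fun θ _ => hdiff θ))
        exact (key.2.differentiableAt).const_mul _
      refine claim2.congr_of_eventuallyEq ?_
      filter_upwards [ball_mem_nhds z₀ hε0] with z hz
      exact claim1 z hz
    · -- easy case: h = g / ℓ near z₀
      have hopen : IsOpen (Ω ∩ {z | L z - c ≠ 0}) :=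
        hΩo.inter (IsOpen.preimage (L.continuous.sub continuous_const) isOpen_compl_singleton)
      have h1 : DifferentiableAt ℂ g z₀ := hg.differentiableAt (hΩo.mem_nhds hz₀)
      have h2 : DifferentiableAt ℂ (fun z : Fin n → ℂ => L z - c) z₀ :=
        (L.differentiable.differentiableAt).sub_const c
      refine (h1.mul (h2.inv hc0)).congr_of_eventuallyEq ?_
      filter_upwards [hopen.mem_nhds ⟨hz₀, hc0⟩] with z hz
      simp only [hhdef, if_neg hz.2, div_eq_mul_inv]
      rfl
  · -- the factorization
    intro z hz
    rw [← hL z]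
    by_cases h0 : L z - c = 0
    · rw [h0, zero_mul]
      exact hvan' z hz h0
    · simp only [hhdef, if_neg h0]
      field_simp
end
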